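/- Under the mixture setup, for any x ∈ (0, 1] one has ((1 − x)/x) · Σ_{i=1}^n P({X̃_i = x} ∩ Ã) = Σ_{i=1}^n P({X̃_i = 1 − x} ∩ Ã). -/

import Mathlib

open MeasureTheory
open scoped ENNReal

noncomputable section

lemma level_inter_eq {Ω : Type} {m : MeasurableSpace Ω} [mΩ : MeasurableSpace Ω]
    (hm : m ≤ mΩ) (P : Measure Ω)
    [IsProbabilityMeasure P] {A : Set Ω}
    (hA : MeasurableSet A) (c : ℝ) :
    (P ({ω | (P[A.indicator (fun _ => (1 : ℝ)) | m]) ω = c} ∩ A)).toReal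
      = c * (P {ω | (P[A.indicator (fun _ => (1 : ℝ)) | m]) ω = c}).toReal := by
  set Y := P[A.indicator (fun _ => (1 : ℝ)) | m] with hY
  have hYsm : StronglyMeasurable[m] Y := stronglyMeasurable_condExp
  have hs_m : MeasurableSet[m] {ω | Y ω = c} :=
    hYsm.measurable (measurableSet_singleton c)
  have hs : MeasurableSet {ω | Y ω = c} := hm _ hs_m
  have hf_int : Integrable (A.indicator (fun _ => (1 : ℝ))) P :=
    (integrable_const (1 : ℝ)).indicator hA
  have h1 : ∫ ω in {ω | Y ω = c}, Y ω ∂P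
      = ∫ ω in {ω | Y ω = c}, A.indicator (fun _ => (1 : ℝ)) ω ∂P :=
    setIntegral_condExp hm hf_int hs_m
  have h2 : ∫ ω in {ω | Y ω = c}, Y ω ∂P = c * (P {ω | Y ω = c}).toReal := by
    rw [setIntegral_congr_fun hs (fun ω hω => hω), setIntegral_const, smul_eq_mul, mul_comm, measureReal_def]
  have h3 : ∫ ω in {ω | Y ω = c}, A.indicator (fun _ => (1 : ℝ)) ω ∂P
      = (P ({ω | Y ω = c} ∩ A)).toReal := by
    rw [setIntegral_indicator hA, setIntegral_const, smul_eq_mul, mul_one, measureReal_def]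
  rw [← h3, ← h1, h2]

lemma level_inter_compl_eq {Ω : Type} {m : MeasurableSpace Ω} [mΩ : MeasurableSpace Ω]
    (hm : m ≤ mΩ) (P : Measure Ω)
    [IsProbabilityMeasure P] {A : Set Ω}
    (hA : MeasurableSet A) (c : ℝ) :
    (P ({ω | (P[A.indicator (fun _ => (1 : ℝ)) | m]) ω = c} ∩ Aᶜ)).toReal
      = (1 - c) * (P {ω | (P[A.indicator (fun _ => (1 : ℝ)) | m]) ω = c}).toReal := by
  set Y := P[A.indicator (fun _ => (1 : ℝ)) | m] with hY
  set s := {ω | Y ω = c} with hsdef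
  have hsplit : P (s ∩ A) + P (s ∩ Aᶜ) = P s := by
    have := measure_inter_add_diff s hA (μ := P)
    rwa [Set.diff_eq] at this
  have h1 := level_inter_eq hm P hA c
  have hfin1 : P (s ∩ A) ≠ ⊤ := measure_ne_top P _
  have hfin2 : P (s ∩ Aᶜ) ≠ ⊤ := measure_ne_top P _
  have htr : (P (s ∩ A)).toReal + (P (s ∩ Aᶜ)).toReal = (P s).toReal := by
    rw [← ENNReal.toReal_add hfin1 hfin2, hsplit]
  rw [← hY, ← hsdef] at h1
  linarith

theorem mixture_balance {Ω : Type} [mΩ : MeasurableSpace Ω] (P : Measure Ω)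
    [IsProbabilityMeasure P] (n M : ℕ) (hM : 1 ≤ M)
    (A : Set Ω) (hA : MeasurableSet A)
    (G : Fin n → MeasurableSpace Ω) (hG : ∀ i, G i ≤ mΩ)
    (X : Fin n → Ω → ℝ)
    (hX : ∀ i, X i =ᵐ[P] P[A.indicator (fun _ => (1 : ℝ)) | G i])
    (hXfin : ∀ i, ∃ s : Finset ℝ, s.card ≤ M ∧ ∀ᵐ ω ∂P, X i ω ∈ s)
    (U : Ω → ℝ) (hU : Measurable U)
    (hU0 : P {ω | U ω = 0} = 1 / 2) (hU1 : P {ω | U ω = 1} = 1 / 2)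
    (hindep : ProbabilityTheory.Indep (MeasurableSpace.comap U inferInstance)
      ((⨆ i, G i) ⊔ MeasurableSpace.generateFrom {A}) P)
    (Xt : Fin n → Ω → ℝ)
    (hXt : Xt = fun i ω => U ω * X i ω + (1 - U ω) * (1 - X i ω))
    (At : Set Ω) (hAt : At = (A ∩ {ω | U ω = 1}) ∪ (Aᶜ ∩ {ω | U ω = 0}))
    (Gt : Fin n → MeasurableSpace Ω)
    (hGt : Gt = fun i => G i ⊔ MeasurableSpace.comap U inferInstance) :
    ∀ x ∈ Set.Ioc (0 : ℝ) 1,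
      (1 - x) / x * ∑ i : Fin n, (P ({ω | Xt i ω = x} ∩ At)).toReal =
        ∑ i : Fin n, (P ({ω | Xt i ω = 1 - x} ∩ At)).toReal := by
  rintro x ⟨hx0, hx1⟩
  have hbig : ∀ i : Fin n, G i ≤ (⨆ j, G j) ⊔ MeasurableSpace.generateFrom {A} :=
    fun i => le_trans (le_iSup G i) le_sup_left
  have hAb : MeasurableSet[(⨆ j, G j) ⊔ MeasurableSpace.generateFrom {A}] A :=
    (le_sup_right : MeasurableSpace.generateFrom {A} ≤
      (⨆ j, G j) ⊔ MeasurableSpace.generateFrom {A}) _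
      (MeasurableSpace.measurableSet_generateFrom (Set.mem_singleton A))
  have hT1 : MeasurableSet[MeasurableSpace.comap U inferInstance] {ω | U ω = 1} :=
    ⟨{1}, measurableSet_singleton 1, rfl⟩
  have hT0 : MeasurableSet[MeasurableSpace.comap U inferInstance] {ω | U ω = 0} :=
    ⟨{0}, measurableSet_singleton 0, rfl⟩
  have key : ∀ i : Fin n,
      (1 - x) / x * (P ({ω | Xt i ω = x} ∩ At)).toReal
        = (P ({ω | Xt i ω = 1 - x} ∩ At)).toReal := by
    intro i
    set Y := P[A.indicator (fun _ => (1 : ℝ)) | G i] with hYdef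
    have hYsm : StronglyMeasurable[G i] Y := stronglyMeasurable_condExp
    have hYlev : ∀ c : ℝ, MeasurableSet[(⨆ j, G j) ⊔ MeasurableSpace.generateFrom {A}]
        {ω | Y ω = c} :=
      fun c => hbig i _ (hYsm.measurable (measurableSet_singleton c))
    have hYlev0 : ∀ c : ℝ, MeasurableSet {ω | Y ω = c} :=
      fun c => hG i _ (hYsm.measurable (measurableSet_singleton c))
    have main : ∀ c : ℝ, (P ({ω | Xt i ω = c} ∩ At)).toReal
        = (1/2) * (c * (P {ω | Y ω = c}).toReal)
          + (1/2) * (c * (P {ω | Y ω = 1 - c}).toReal) := by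
      intro c
      have hae : (({ω | Xt i ω = c} ∩ At : Set Ω) : Set Ω) =ᵐ[P]
          (({ω | U ω = 1} ∩ ({ω | Y ω = c} ∩ A)) ∪
            ({ω | U ω = 0} ∩ ({ω | Y ω = 1 - c} ∩ Aᶜ)) : Set Ω) := by
        filter_upwards [hX i] with ω hω
        replace hω : X i ω = Y ω := hω
        have hXtω : Xt i ω = U ω * X i ω + (1 - U ω) * (1 - X i ω) := by rw [hXt]
        rw [eq_iff_iff]
        constructor
        · rintro ⟨hc, hat⟩
          rw [hAt] at hat
          rcases hat with ⟨hA1, hu⟩ | ⟨hA0, hu⟩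
          · left
            refine ⟨hu, ?_, hA1⟩
            simp only [Set.mem_setOf_eq] at hu hc ⊢
            rw [hXtω, hu, hω] at hc
            linarith
          · right
            refine ⟨hu, ?_, hA0⟩
            simp only [Set.mem_setOf_eq] at hu hc ⊢
            rw [hXtω, hu, hω] at hc
            linarith
        · rintro (⟨hu, hyc, hA1⟩ | ⟨hu, hyc, hA0⟩)
          · refine ⟨?_, ?_⟩
            · simp only [Set.mem_setOf_eq] at hu hyc ⊢
              rw [hXtω, hu, hω, hyc]
              ring
            · rw [hAt]; exact Or.inl ⟨hA1, hu⟩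
          · refine ⟨?_, ?_⟩
            · simp only [Set.mem_setOf_eq] at hu hyc ⊢
              rw [hXtω, hu, hω, hyc]
              ring
            · rw [hAt]; exact Or.inr ⟨hA0, hu⟩
      have hdisj : Disjoint ({ω | U ω = 1} ∩ ({ω | Y ω = c} ∩ A))
          ({ω | U ω = 0} ∩ ({ω | Y ω = 1 - c} ∩ Aᶜ)) := by
        refine Disjoint.mono Set.inter_subset_left Set.inter_subset_left ?_
        rw [Set.disjoint_left]
        intro ω h1 h0
        simp only [Set.mem_setOf_eq] at h1 h0
        rw [h1] at h0
        norm_num at h0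
      have hmeas2 : MeasurableSet ({ω | U ω = 0} ∩ ({ω | Y ω = 1 - c} ∩ Aᶜ)) :=
        (hU (measurableSet_singleton 0)).inter ((hYlev0 (1 - c)).inter hA.compl)
      have hind1 : P ({ω | U ω = 1} ∩ ({ω | Y ω = c} ∩ A))
          = (1/2) * P ({ω | Y ω = c} ∩ A) := by
        rw [(hindep.indepSet_of_measurableSet hT1 ((hYlev c).inter hAb)).measure_inter_eq_mul,
          hU1]
      have hind0 : P ({ω | U ω = 0} ∩ ({ω | Y ω = 1 - c} ∩ Aᶜ))
          = (1/2) * P ({ω | Y ω = 1 - c} ∩ Aᶜ) := by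
        rw [(hindep.indepSet_of_measurableSet hT0
          ((hYlev (1 - c)).inter hAb.compl)).measure_inter_eq_mul, hU0]
      rw [measure_congr hae, measure_union hdisj hmeas2, hind1, hind0,
        ENNReal.toReal_add (ENNReal.mul_ne_top (by norm_num) (measure_ne_top P _))
          (ENNReal.mul_ne_top (by norm_num) (measure_ne_top P _)),
        ENNReal.toReal_mul, ENNReal.toReal_mul]
      have h2r : ((1:ℝ≥0∞)/2).toReal = (1/2 : ℝ) := by simp
      rw [h2r, level_inter_eq (hG i) P hA c, level_inter_compl_eq (hG i) P hA (1 - c)]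
      ring_nf
      rfl
    have hm1 : (P ({ω | Xt i ω = x} ∩ At)).toReal
        = (1/2) * (x * (P {ω | Y ω = x}).toReal)
          + (1/2) * (x * (P {ω | Y ω = 1 - x}).toReal) := main x
    have hm2 := main (1 - x)
    have hset : {ω | Y ω = 1 - (1 - x)} = {ω | Y ω = x} := by
      norm_num
    rw [hset] at hm2
    have hxne : x ≠ 0 := ne_of_gt hx0
    rw [hm1, hm2]
    field_simp
    ring
  rw [Finset.mul_sum]
  exact Finset.sum_congr rfl (fun i _ => key i)
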